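/- arXiv:1712.03631 — 4 statements merged into one kernel-verified Lean document; each statement's English description precedes it below -/
import Mathlib

section
/- Let W̄(x) = W₀ + S₁(x − x_{i+1/2}) + (1/2)S₂(x − x_{i+1/2})² + (1/6)S₃(x − x_{i+1/2})³ + (1/24)S₄(x − x_{i+1/2})⁴ be a quartic polynomial on a uniform grid with spacing Δx and cells I_{i+k} = [x_{i+1/2} + (k−1)Δx, x_{i+1/2} + kΔx]. If the cell averages of W̄ over I_{i-1}, I_i, I_{i+1}, I_{i+2} equal W_{i-1}, W_i, W_{i+1}, W_{i+2} respectively, then S₁ = [−(1/12)(W_{i+2} − W_{i-1}) + (5/4)(W_{i+1} − W_i)]/Δx and S₂ = [−(1/8)(W_{i+2} + W_{i-1}) + (31/8)(W_{i+1} + W_i) − (15/2)W₀]/Δx². -/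
open intervalIntegral in
lemma quartic_int (xh W0 S1 S2 S3 S4 a b : ℝ) :
    (∫ x in (xh + a)..(xh + b), (W0 + S1 * (x - xh) + (1 / 2) * S2 * (x - xh) ^ 2
        + (1 / 6) * S3 * (x - xh) ^ 3 + (1 / 24) * S4 * (x - xh) ^ 4))
    = W0*(b-a) + S1/2*(b^2-a^2) + S2/6*(b^3-a^3) + S3/24*(b^4-a^4) + S4/120*(b^5-a^5) := by
  have h := intervalIntegral.integral_eq_sub_of_hasDerivAt
    (f := fun x : ℝ => W0 * (x - xh) + S1/2 * (x - xh)^2 + S2/6 * (x - xh)^3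
      + S3/24 * (x - xh)^4 + S4/120 * (x - xh)^5)
    (f' := fun x : ℝ => W0 + S1 * (x - xh) + (1 / 2) * S2 * (x - xh) ^ 2
        + (1 / 6) * S3 * (x - xh) ^ 3 + (1 / 24) * S4 * (x - xh) ^ 4)
    (a := xh + a) (b := xh + b)
    (fun x _ => by
      have : HasDerivAt (fun x : ℝ => x - xh) 1 x := (hasDerivAt_id x).sub_const xh
      have h1 := ((this.pow 2).const_mul (S1/2))
      have h2 := ((this.pow 3).const_mul (S2/6))
      have h3 := ((this.pow 4).const_mul (S3/24))
      have h4 := ((this.pow 5).const_mul (S4/120))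
      have h0 := (this.const_mul W0)
      have := ((((h0.add h1).add h2).add h3).add h4)
      refine this.congr_deriv ?_
      push_cast; ring)
    (Continuous.intervalIntegrable (by continuity) _ _)
  rw [h]; ring

/-- Derivatives of the across-interface quartic expansion from four cell averages:
if the quartic `W̄` has prescribed cell averages over `I_{i-1}, I_i, I_{i+1}, I_{i+2}`,
then its first and second derivative coefficients at `x_{i+1/2}` are as stated. -/
theorem equilibrium_slope_formulas (xh Δx W0 S1 S2 S3 S4 Wm1 Wi Wp1 Wp2 : ℝ)
    (hΔx : 0 < Δx)
    (Wbar : ℝ → ℝ)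
    (hWbar : ∀ x, Wbar x = W0 + S1 * (x - xh) + (1 / 2) * S2 * (x - xh) ^ 2
        + (1 / 6) * S3 * (x - xh) ^ 3 + (1 / 24) * S4 * (x - xh) ^ 4)
    (hm1 : (1 / Δx) * ∫ x in (xh + (-2 : ℝ) * Δx)..(xh + (-1 : ℝ) * Δx), Wbar x = Wm1)
    (h0 : (1 / Δx) * ∫ x in (xh + (-1 : ℝ) * Δx)..(xh + (0 : ℝ) * Δx), Wbar x = Wi)
    (hp1 : (1 / Δx) * ∫ x in (xh + (0 : ℝ) * Δx)..(xh + (1 : ℝ) * Δx), Wbar x = Wp1)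
    (hp2 : (1 / Δx) * ∫ x in (xh + (1 : ℝ) * Δx)..(xh + (2 : ℝ) * Δx), Wbar x = Wp2) :
    S1 = (-(1 / 12) * (Wp2 - Wm1) + (5 / 4) * (Wp1 - Wi)) / Δx
    ∧ S2 = (-(1 / 8) * (Wp2 + Wm1) + (31 / 8) * (Wp1 + Wi) - (15 / 2) * W0) / Δx ^ 2 := by
  simp only [hWbar] at hm1 h0 hp1 hp2
  rw [quartic_int] at hm1 h0 hp1 hp2
  have hd : Δx ≠ 0 := hΔx.ne'
  field_simp at hm1 h0 hp1 hp2
  constructor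
  · rw [eq_div_iff hd]
    apply mul_right_cancel₀ hd
    linear_combination (Δx/414720) * hm1 - (Δx/27648) * h0 + (Δx/27648) * hp1 - (Δx/414720) * hp2
  · rw [eq_div_iff (pow_ne_zero 2 hd)]
    apply mul_right_cancel₀ hd
    linear_combination (-(Δx/276480)) * hm1 + (31*Δx/276480) * h0 + (31*Δx/276480) * hp1 - (Δx/276480) * hp2
end

section
/- Given three cell averages W_{i-1}, W_i, W_{i+1} over uniform cells of width Δx and two cell interface values W_{i-1/2}, W_{i+1/2}, there exists a unique polynomial W(x) of degree at most 4 whose averages over I_{i-1}, I_i, I_{i+1} equal W_{i-1}, W_i, W_{i+1} and whose values at x_{i-1/2} and x_{i+1/2} equal W_{i-1/2} and W_{i+1/2}. -/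
open Polynomial intervalIntegral

/-- Integral of an explicit quartic (in powers of `x - xi`) over an interval. -/
lemma quartic_poly_int (A B xi c0 c1 c2 c3 c4 : ℝ) :
    (∫ x in A..B, (c0 + c1*(x - xi) + c2*(x - xi)^2 + c3*(x - xi)^3 + c4*(x - xi)^4)) =
      c0*(B - A) + c1*((B - xi)^2 - (A - xi)^2)/2 + c2*((B - xi)^3 - (A - xi)^3)/3
        + c3*((B - xi)^4 - (A - xi)^4)/4 + c4*((B - xi)^5 - (A - xi)^5)/5 := by
  have key : ∀ x : ℝ, HasDerivAt
      (fun x : ℝ => c0*x + c1*(x - xi)^2/2 + c2*(x - xi)^3/3 + c3*(x - xi)^4/4 + c4*(x - xi)^5/5)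
      (c0 + c1*(x - xi) + c2*(x - xi)^2 + c3*(x - xi)^3 + c4*(x - xi)^4) x := by
    intro x
    have h : HasDerivAt (fun x : ℝ => x - xi) 1 x := (hasDerivAt_id x).sub_const xi
    have := ((((hasDerivAt_id x).const_mul c0).add (((h.pow 2).const_mul c1).div_const 2)).add
      (((h.pow 3).const_mul c2).div_const 3)).add (((h.pow 4).const_mul c3).div_const 4) |>.add
      (((h.pow 5).const_mul c4).div_const 5)
    exact this.congr_deriv (by norm_num; ring)
  rw [intervalIntegral.integral_eq_sub_of_hasDerivAt (fun x _ => key x)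
    ((Continuous.intervalIntegrable (by continuity) A B))]
  ring

/-- A polynomial of degree at most 4 with three vanishing cell averages and two vanishing
interface values is zero. -/
lemma quartic_ker_zero (xi Δx : ℝ) (hΔx : 0 < Δx) (d : Polynomial ℝ) (hdeg : d.natDegree ≤ 4)
    (h1 : (∫ x in (xi + (-3 / 2 : ℝ) * Δx)..(xi + (-1 / 2 : ℝ) * Δx), d.eval x) = 0)
    (h2 : (∫ x in (xi + (-1 / 2 : ℝ) * Δx)..(xi + (1 / 2 : ℝ) * Δx), d.eval x) = 0)
    (h3 : (∫ x in (xi + (1 / 2 : ℝ) * Δx)..(xi + (3 / 2 : ℝ) * Δx), d.eval x) = 0)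
    (h4 : d.eval (xi - Δx / 2) = 0) (h5 : d.eval (xi + Δx / 2) = 0) : d = 0 := by
  have hne : Δx ≠ 0 := ne_of_gt hΔx
  set b : ℕ → ℝ := fun k => (Polynomial.taylor xi d).coeff k with hb
  have hr : ∀ x : ℝ, d.eval x =
      b 0 + b 1*(x - xi) + b 2*(x - xi)^2 + b 3*(x - xi)^3 + b 4*(x - xi)^4 := by
    intro x
    have hlt : (Polynomial.taylor xi d).natDegree < 5 := by
      rw [Polynomial.natDegree_taylor]; omega
    have := Polynomial.eval_eq_sum_range' hlt (x - xi)
    rw [← Polynomial.taylor_eval_sub xi d x, this]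
    simp only [hb, Finset.sum_range_succ, Finset.sum_range_zero]
    ring
  have congr1 : ∀ A B : ℝ, (∫ x in A..B, d.eval x) =
      ∫ x in A..B, (b 0 + b 1*(x - xi) + b 2*(x - xi)^2 + b 3*(x - xi)^3 + b 4*(x - xi)^4) := by
    intro A B
    exact intervalIntegral.integral_congr (fun x _ => hr x)
  rw [congr1, quartic_poly_int] at h1 h2 h3
  rw [hr] at h4 h5
  have E1 : b 0 - b 1*Δx + 13/12*(b 2*Δx^2) - 5/4*(b 3*Δx^3) + 121/80*(b 4*Δx^4) = 0 := by
    have h : Δx * (b 0 - b 1*Δx + 13/12*(b 2*Δx^2) - 5/4*(b 3*Δx^3) + 121/80*(b 4*Δx^4)) = 0 := by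
      linear_combination h1
    exact (mul_eq_zero.mp h).resolve_left hne
  have E2 : b 0 + 1/12*(b 2*Δx^2) + 1/80*(b 4*Δx^4) = 0 := by
    have h : Δx * (b 0 + 1/12*(b 2*Δx^2) + 1/80*(b 4*Δx^4)) = 0 := by
      linear_combination h2
    exact (mul_eq_zero.mp h).resolve_left hne
  have E3 : b 0 + b 1*Δx + 13/12*(b 2*Δx^2) + 5/4*(b 3*Δx^3) + 121/80*(b 4*Δx^4) = 0 := by
    have h : Δx * (b 0 + b 1*Δx + 13/12*(b 2*Δx^2) + 5/4*(b 3*Δx^3) + 121/80*(b 4*Δx^4)) = 0 := by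
      linear_combination h3
    exact (mul_eq_zero.mp h).resolve_left hne
  have E4 : b 0 - 1/2*(b 1*Δx) + 1/4*(b 2*Δx^2) - 1/8*(b 3*Δx^3) + 1/16*(b 4*Δx^4) = 0 := by
    linear_combination h4
  have E5 : b 0 + 1/2*(b 1*Δx) + 1/4*(b 2*Δx^2) + 1/8*(b 3*Δx^3) + 1/16*(b 4*Δx^4) = 0 := by
    linear_combination h5
  have hu2 : b 2 * Δx^2 = 0 := by
    linear_combination (30/8)*E4 + (30/8)*E5 - (58/8)*E2 - (1/8)*E1 - (1/8)*E3
  have hu4 : b 4 * Δx^4 = 0 := by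
    linear_combination (1/3)*E1 + (1/3)*E3 - (2/3)*E2 - (2/3)*hu2
  have hu0 : b 0 = 0 := by
    linear_combination E2 - (1/12)*hu2 - (1/80)*hu4
  have hu3 : b 3 * Δx^3 = 0 := by
    linear_combination (1/2)*E3 - (1/2)*E1 - E5 + E4
  have hu1 : b 1 * Δx = 0 := by
    linear_combination E5 - E4 - (1/4)*hu3
  have hb1 : b 1 = 0 := by
    rcases mul_eq_zero.mp hu1 with h | h; exact h; exact absurd h hne
  have hb2 : b 2 = 0 := by
    rcases mul_eq_zero.mp hu2 with h | h; exact h; exact absurd h (pow_ne_zero _ hne)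
  have hb3 : b 3 = 0 := by
    rcases mul_eq_zero.mp hu3 with h | h; exact h; exact absurd h (pow_ne_zero _ hne)
  have hb4 : b 4 = 0 := by
    rcases mul_eq_zero.mp hu4 with h | h; exact h; exact absurd h (pow_ne_zero _ hne)
  apply Polynomial.funext
  intro x
  rw [hr x, hu0, hb1, hb2, hb3, hb4]
  simp

set_option maxHeartbeats 1000000 in
/-- Existence and uniqueness of the degree-4 polynomial matching three cell averages
and two cell interface values on a uniform grid. -/
theorem compact_quartic_reconstruction_unique
    (xi Δx Wm1 Wi Wp1 Wl Wr : ℝ) (hΔx : 0 < Δx) :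
    ∃! p : Polynomial ℝ, p.degree ≤ 4
      ∧ (1 / Δx) * (∫ x in (xi + (-3 / 2 : ℝ) * Δx)..(xi + (-1 / 2 : ℝ) * Δx), p.eval x) = Wm1
      ∧ (1 / Δx) * (∫ x in (xi + (-1 / 2 : ℝ) * Δx)..(xi + (1 / 2 : ℝ) * Δx), p.eval x) = Wi
      ∧ (1 / Δx) * (∫ x in (xi + (1 / 2 : ℝ) * Δx)..(xi + (3 / 2 : ℝ) * Δx), p.eval x) = Wp1
      ∧ p.eval (xi - Δx / 2) = Wl
      ∧ p.eval (xi + Δx / 2) = Wr := by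
  have hne : Δx ≠ 0 := ne_of_gt hΔx
  set S := Wp1 + Wm1 with hS
  set D := Wp1 - Wm1 with hD
  set P := Wr + Wl with hP
  set Q := Wr - Wl with hQ
  set c2 := (30*P - 58*Wi - S)/8 with hc2
  set c4 := 5*(S + 10*Wi - 6*P)/12 with hc4
  set c0 := Wi - c2/12 - c4/80 with hc0
  set c3 := (D - 2*Q)/2 with hc3
  set c1 := (10*Q - D)/8 with hc1
  set p : Polynomial ℝ := C c0 + C (c1/Δx) * (X - C xi) + C (c2/Δx^2) * (X - C xi)^2
      + C (c3/Δx^3) * (X - C xi)^3 + C (c4/Δx^4) * (X - C xi)^4 with hp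
  have hdeg : p.degree ≤ 4 := by
    rw [hp]; compute_degree
  have hev : ∀ x : ℝ, p.eval x = c0 + (c1/Δx)*(x - xi) + (c2/Δx^2)*(x - xi)^2
      + (c3/Δx^3)*(x - xi)^3 + (c4/Δx^4)*(x - xi)^4 := by
    intro x; rw [hp]; simp
  have hint : ∀ A B : ℝ, (∫ x in A..B, p.eval x) =
      (c0)*(B - A) + (c1/Δx)*((B - xi)^2 - (A - xi)^2)/2 + (c2/Δx^2)*((B - xi)^3 - (A - xi)^3)/3
        + (c3/Δx^3)*((B - xi)^4 - (A - xi)^4)/4 + (c4/Δx^4)*((B - xi)^5 - (A - xi)^5)/5 := by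
    intro A B
    rw [intervalIntegral.integral_congr (g := fun x => c0 + (c1/Δx)*(x - xi) + (c2/Δx^2)*(x - xi)^2
        + (c3/Δx^3)*(x - xi)^3 + (c4/Δx^4)*(x - xi)^4) (fun x _ => hev x), quartic_poly_int]
  have p1 : (1 / Δx) * (∫ x in (xi + (-3 / 2 : ℝ) * Δx)..(xi + (-1 / 2 : ℝ) * Δx), p.eval x)
      = Wm1 := by
    rw [hint]; field_simp; simp only [hc0, hc1, hc2, hc3, hc4, hS, hD, hP, hQ]; ring
  have p2 : (1 / Δx) * (∫ x in (xi + (-1 / 2 : ℝ) * Δx)..(xi + (1 / 2 : ℝ) * Δx), p.eval x)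
      = Wi := by
    rw [hint]; field_simp; simp only [hc0, hc1, hc2, hc3, hc4, hS, hD, hP, hQ]; ring
  have p3 : (1 / Δx) * (∫ x in (xi + (1 / 2 : ℝ) * Δx)..(xi + (3 / 2 : ℝ) * Δx), p.eval x)
      = Wp1 := by
    rw [hint]; field_simp; simp only [hc0, hc1, hc2, hc3, hc4, hS, hD, hP, hQ]; ring
  have p4 : p.eval (xi - Δx / 2) = Wl := by
    rw [hev]; field_simp; simp only [hc0, hc1, hc2, hc3, hc4, hS, hD, hP, hQ]; ring
  have p5 : p.eval (xi + Δx / 2) = Wr := by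
    rw [hev]; field_simp; simp only [hc0, hc1, hc2, hc3, hc4, hS, hD, hP, hQ]; ring
  refine ⟨p, ⟨hdeg, p1, p2, p3, p4, p5⟩, ?_⟩
  rintro q ⟨hqdeg, q1, q2, q3, q4, q5⟩
  have hdint : ∀ A B : ℝ,
      (∫ x in A..B, (q - p).eval x) = (∫ x in A..B, q.eval x) - ∫ x in A..B, p.eval x := by
    intro A B
    simp only [Polynomial.eval_sub]
    exact intervalIntegral.integral_sub
      ((q.continuous_aeval).intervalIntegrable A B)
      ((p.continuous_aeval).intervalIntegrable A B)
  have hcancel : ∀ I J W : ℝ, (1 / Δx) * I = W → (1 / Δx) * J = W → I - J = 0 := by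
    intro I J W hI hJ
    have h := hI.trans hJ.symm
    have : I = J := by
      field_simp at h; exact h
    rw [this, sub_self]
  have hker := quartic_ker_zero xi Δx hΔx (q - p)
    (by
      have : (q - p).degree ≤ 4 := le_trans (Polynomial.degree_sub_le q p) (max_le hqdeg hdeg)
      exact Polynomial.natDegree_le_iff_degree_le.mpr (by exact_mod_cast this))
    (by rw [hdint]; exact hcancel _ _ _ q1 p1)
    (by rw [hdint]; exact hcancel _ _ _ q2 p2)
    (by rw [hdint]; exact hcancel _ _ _ q3 p3)
    (by simp only [Polynomial.eval_sub, q4, p4, sub_self])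
    (by simp only [Polynomial.eval_sub, q5, p5, sub_self])
  exact sub_eq_zero.mp hker
end

section
/- For the quadratic interpolant p₀ at nodes y_{(j-1)_2} = y_j − Δy + Δy/(2√3), y_{j_1} = y_j − Δy/(2√3), y_{j_2} = y_j + Δy/(2√3) of data W_{(j-1)_2}, W_{j_1}, W_{j_2}, the smoothness indicator β̌₀ := Δy³·∫_{y_j − Δy/2}^{y_j + Δy/2} (p₀''(y))² dy equals (4/(√3 − 1)²)·[√3·W_{(j-1)_2} − 3·W_{j_1} + (3 − √3)·W_{j_2}]². -/
/-- The smoothness indicator of the quadratic interpolant `p₀` on the nonuniform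
Gaussian nodes equals the stated explicit square. -/
theorem smoothness_indicator_formula (yj Δy W1 W2 W3 : ℝ) (hΔy : 0 < Δy)
    (p : Polynomial ℝ) (hp : p.degree ≤ 2)
    (h1 : p.eval (yj - Δy + Δy / (2 * Real.sqrt 3)) = W1)
    (h2 : p.eval (yj - Δy / (2 * Real.sqrt 3)) = W2)
    (h3 : p.eval (yj + Δy / (2 * Real.sqrt 3)) = W3) :
    Δy ^ 3 * ∫ y in (yj - Δy / 2)..(yj + Δy / 2),
        ((Polynomial.derivative (Polynomial.derivative p)).eval y) ^ 2
      = (4 / (Real.sqrt 3 - 1) ^ 2) *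
          (Real.sqrt 3 * W1 - 3 * W2 + (3 - Real.sqrt 3) * W3) ^ 2 := by
  set s := Real.sqrt 3 with hs_def
  have hs : s ^ 2 = 3 := Real.sq_sqrt (by norm_num)
  have hs_pos : 0 < s := Real.sqrt_pos.mpr (by norm_num)
  have hs_ne : s ≠ 0 := ne_of_gt hs_pos
  have hs1 : s - 1 ≠ 0 := by
    have : 1 < s := by nlinarith
    linarith
  -- rewrite the node offset without division by s
  have hdiv : Δy / (2 * s) = s * Δy / 6 := by
    field_simp
    linear_combination (-2) * hs
  -- degree facts
  have hd2 : p.natDegree ≤ 2 := Polynomial.natDegree_le_iff_degree_le.mpr hp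
  have hd1 : (Polynomial.derivative p).natDegree ≤ 1 :=
    le_trans (Polynomial.natDegree_derivative_le p) (by omega)
  have hd0 : (Polynomial.derivative (Polynomial.derivative p)).natDegree ≤ 0 :=
    le_trans (Polynomial.natDegree_derivative_le _) (by omega)
  set a := p.coeff 0
  set b := p.coeff 1
  set c := p.coeff 2
  have hpp : Polynomial.derivative (Polynomial.derivative p) = Polynomial.C (2 * c) := by
    rw [Polynomial.eq_C_of_natDegree_le_zero hd0]
    congr 1
    simp [Polynomial.coeff_derivative, c]
    ring
  have heval : ∀ x : ℝ, p.eval x = a + b * x + c * x ^ 2 := by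
    intro x
    have := Polynomial.eval_eq_sum_range' (lt_of_le_of_lt hd2 (by norm_num : (2:ℕ) < 3)) x
    simpa [Finset.sum_range_succ, a, b, c] using this
  -- key algebraic identity
  have key : s * W1 - 3 * W2 + (3 - s) * W3 = c * (s - 1) * Δy ^ 2 := by
    rw [← h1, ← h2, ← h3, heval, heval, heval, hdiv]
    linear_combination (-(c * Δy ^ 2 / 3)) * hs
  -- compute the integral
  rw [hpp]
  simp only [Polynomial.eval_C]
  rw [intervalIntegral.integral_const]
  rw [key]
  have : (yj + Δy / 2 - (yj - Δy / 2)) = Δy := by ring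
  rw [this]
  field_simp
  ring
end

section
/- If coefficients satisfy the recovery relations F₀ = (4𝔽(Δt/2) − 𝔽(Δt))/Δt and F₁ = 4(𝔽(Δt) − 2𝔽(Δt/2))/Δt² where 𝔽(δ) = ∫₀^δ F(s) ds for an arbitrary C² function F, then F₀ = F(0) + O(Δt²) and F₁ = F'(0) + O(Δt). -/
open Asymptotics

/-- The flux-recovery formulas applied to the exact time integral of an arbitrary C²
function recover `F(0)` to second order and `F'(0)` to first order as `Δt → 0⁺`. -/
theorem flux_recovery_accuracy (F : ℝ → ℝ) (hF : ContDiff ℝ 2 F) :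
    (fun Δt : ℝ =>
        (4 * (∫ s in (0:ℝ)..(Δt / 2), F s) - ∫ s in (0:ℝ)..Δt, F s) / Δt - F 0)
      =O[nhdsWithin (0 : ℝ) (Set.Ioi 0)] (fun Δt => Δt ^ 2)
    ∧ (fun Δt : ℝ =>
        4 * ((∫ s in (0:ℝ)..Δt, F s) - 2 * ∫ s in (0:ℝ)..(Δt / 2), F s) / Δt ^ 2
          - deriv F 0)
      =O[nhdsWithin (0 : ℝ) (Set.Ioi 0)] (fun Δt => Δt) := by
  have hFc : Continuous F := hF.continuous
  have hFd : DifferentiableAt ℝ F 0 := (hF.differentiable two_ne_zero).differentiableAt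
  have hFon : ContDiffOn ℝ ((1:ℕ) + 1) F (Set.Icc (0:ℝ) 1) := by
    exact_mod_cast hF.contDiffOn
  obtain ⟨C, hC⟩ := exists_taylor_mean_remainder_bound (n := 1) zero_le_one hFon
  -- rewrite the Taylor polynomial
  have hR : ∀ x ∈ Set.Icc (0:ℝ) 1, |F x - (F 0 + deriv F 0 * x)| ≤ C * x ^ 2 := by
    intro x hx
    have h := hC x hx
    rw [taylor_within_apply] at h
    have hud : UniqueDiffWithinAt ℝ (Set.Icc (0:ℝ) 1) 0 :=
      (uniqueDiffOn_Icc zero_lt_one) 0 (Set.left_mem_Icc.2 zero_le_one)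
    have hdw : derivWithin F (Set.Icc (0:ℝ) 1) 0 = deriv F 0 :=
      hFd.derivWithin hud
    simp [Finset.sum_range_succ, iteratedDerivWithin_zero, iteratedDerivWithin_one,
      hdw] at h
    have e : F x - (F 0 + deriv F 0 * x) = F x - (F 0 + x * deriv F 0) := by ring
    rw [e]; exact h
  have hC0 : 0 ≤ C := by
    have := (abs_nonneg _).trans (hR 1 (by norm_num))
    linarith
  -- integral estimate
  have hint : ∀ δ : ℝ, δ ∈ Set.Icc (0:ℝ) 1 →
      |(∫ s in (0:ℝ)..δ, F s) - (δ * F 0 + δ ^ 2 / 2 * deriv F 0)| ≤ C * δ ^ 3 := by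
    intro δ hδ
    have hδ0 : (0:ℝ) ≤ δ := hδ.1
    have hi1 : IntervalIntegrable F MeasureTheory.volume 0 δ :=
      hFc.intervalIntegrable _ _
    have hi2 : IntervalIntegrable (fun s => F 0 + deriv F 0 * s) MeasureTheory.volume 0 δ :=
      (by continuity : Continuous fun s : ℝ => F 0 + deriv F 0 * s).intervalIntegrable _ _
    have e1 : (∫ s in (0:ℝ)..δ, (F s - (F 0 + deriv F 0 * s)))
        = (∫ s in (0:ℝ)..δ, F s) - (δ * F 0 + δ ^ 2 / 2 * deriv F 0) := by
      rw [intervalIntegral.integral_sub hi1 hi2]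
      have : (∫ s in (0:ℝ)..δ, (F 0 + deriv F 0 * s))
          = δ * F 0 + δ ^ 2 / 2 * deriv F 0 := by
        rw [intervalIntegral.integral_add (by simp) (by
          exact (continuous_const.mul continuous_id).intervalIntegrable _ _)]
        rw [intervalIntegral.integral_const_mul]
        simp [integral_id]
        ring
      rw [this]
    rw [← e1]
    have hb : ∀ s ∈ Set.uIoc (0:ℝ) δ, ‖F s - (F 0 + deriv F 0 * s)‖ ≤ C * δ ^ 2 := by
      intro s hs
      rw [Set.uIoc_of_le hδ0] at hs
      have hs0 : 0 < s := hs.1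
      have hsδ : s ≤ δ := hs.2
      have hs1 : s ∈ Set.Icc (0:ℝ) 1 := ⟨hs0.le, hsδ.trans hδ.2⟩
      calc ‖F s - (F 0 + deriv F 0 * s)‖ ≤ C * s ^ 2 := hR s hs1
        _ ≤ C * δ ^ 2 := mul_le_mul_of_nonneg_left (by nlinarith) hC0
    have := intervalIntegral.norm_integral_le_of_norm_le_const hb
    rw [Real.norm_eq_abs] at this
    calc |∫ s in (0:ℝ)..δ, (F s - (F 0 + deriv F 0 * s))|
        ≤ C * δ ^ 2 * |δ - 0| := this
      _ = C * δ ^ 3 := by rw [sub_zero, abs_of_nonneg hδ0]; ring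
  constructor
  · rw [isBigO_iff]
    refine ⟨2 * C, ?_⟩
    filter_upwards [Ioo_mem_nhdsGT_of_mem (Set.left_mem_Ico.2 zero_lt_one)] with t ht
    have ht0 : 0 < t := ht.1
    have ht1 : t < 1 := ht.2
    have h1 := hint (t / 2) ⟨by linarith, by linarith⟩
    have h2 := hint t ⟨ht0.le, ht1.le⟩
    have key : |4 * (∫ s in (0:ℝ)..(t/2), F s) - (∫ s in (0:ℝ)..t, F s) - t * F 0|
        ≤ 2 * C * t ^ 3 := by
      have e : 4 * (∫ s in (0:ℝ)..(t/2), F s) - (∫ s in (0:ℝ)..t, F s) - t * F 0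
          = 4 * ((∫ s in (0:ℝ)..(t/2), F s) - ((t/2) * F 0 + (t/2)^2/2 * deriv F 0))
            - ((∫ s in (0:ℝ)..t, F s) - (t * F 0 + t^2/2 * deriv F 0)) := by ring
      rw [e]
      have := abs_sub (4 * ((∫ s in (0:ℝ)..(t/2), F s) - ((t/2) * F 0 + (t/2)^2/2 * deriv F 0)))
        ((∫ s in (0:ℝ)..t, F s) - (t * F 0 + t^2/2 * deriv F 0))
      have h4 : |4 * ((∫ s in (0:ℝ)..(t/2), F s) - ((t/2) * F 0 + (t/2)^2/2 * deriv F 0))|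
          ≤ 4 * (C * (t/2)^3) := by
        rw [abs_mul]; simp only [abs_of_nonneg (by norm_num : (0:ℝ) ≤ 4)]
        nlinarith [h1]
      calc _ ≤ _ := abs_sub _ _
        _ ≤ 4 * (C * (t/2)^3) + C * t^3 := add_le_add h4 h2
        _ ≤ 2 * C * t ^ 3 := by nlinarith [pow_pos ht0 3]
    have e2 : (4 * (∫ s in (0:ℝ)..(t / 2), F s) - ∫ s in (0:ℝ)..t, F s) / t - F 0
        = (4 * (∫ s in (0:ℝ)..(t/2), F s) - (∫ s in (0:ℝ)..t, F s) - t * F 0) / t := by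
      field_simp
    rw [Real.norm_eq_abs, Real.norm_eq_abs, e2, abs_div, abs_of_pos ht0]
    rw [div_le_iff₀ ht0]
    calc |4 * (∫ s in (0:ℝ)..(t/2), F s) - (∫ s in (0:ℝ)..t, F s) - t * F 0|
        ≤ 2 * C * t ^ 3 := key
      _ = 2 * C * |t ^ 2| * t := by rw [abs_of_nonneg (sq_nonneg t)]; ring
  · rw [isBigO_iff]
    refine ⟨5 * C, ?_⟩
    filter_upwards [Ioo_mem_nhdsGT_of_mem (Set.left_mem_Ico.2 zero_lt_one)] with t ht
    have ht0 : 0 < t := ht.1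
    have ht1 : t < 1 := ht.2
    have h1 := hint (t / 2) ⟨by linarith, by linarith⟩
    have h2 := hint t ⟨ht0.le, ht1.le⟩
    have key : |4 * ((∫ s in (0:ℝ)..t, F s) - 2 * ∫ s in (0:ℝ)..(t/2), F s)
        - t ^ 2 * deriv F 0| ≤ 5 * C * t ^ 3 := by
      have e : 4 * ((∫ s in (0:ℝ)..t, F s) - 2 * ∫ s in (0:ℝ)..(t/2), F s)
            - t ^ 2 * deriv F 0
          = 4 * ((∫ s in (0:ℝ)..t, F s) - (t * F 0 + t^2/2 * deriv F 0))
            - 8 * ((∫ s in (0:ℝ)..(t/2), F s) - ((t/2) * F 0 + (t/2)^2/2 * deriv F 0)) := by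
        ring
      rw [e]
      have h4 : |4 * ((∫ s in (0:ℝ)..t, F s) - (t * F 0 + t^2/2 * deriv F 0))|
          ≤ 4 * (C * t^3) := by
        rw [abs_mul]; simp only [abs_of_nonneg (by norm_num : (0:ℝ) ≤ 4)]
        nlinarith [h2]
      have h8 : |8 * ((∫ s in (0:ℝ)..(t/2), F s) - ((t/2) * F 0 + (t/2)^2/2 * deriv F 0))|
          ≤ 8 * (C * (t/2)^3) := by
        rw [abs_mul]; simp only [abs_of_nonneg (by norm_num : (0:ℝ) ≤ 8)]
        nlinarith [h1]
      calc _ ≤ _ := abs_sub _ _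
        _ ≤ 4 * (C * t^3) + 8 * (C * (t/2)^3) := add_le_add h4 h8
        _ = 5 * C * t ^ 3 := by ring
    have e2 : 4 * ((∫ s in (0:ℝ)..t, F s) - 2 * ∫ s in (0:ℝ)..(t/2), F s) / t ^ 2
          - deriv F 0
        = (4 * ((∫ s in (0:ℝ)..t, F s) - 2 * ∫ s in (0:ℝ)..(t/2), F s)
            - t ^ 2 * deriv F 0) / t ^ 2 := by
      field_simp
      try ring
    have ht2 : (0:ℝ) < t ^ 2 := pow_pos ht0 2
    rw [Real.norm_eq_abs, Real.norm_eq_abs, e2, abs_div, abs_of_pos ht2]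
    rw [div_le_iff₀ ht2]
    calc _ ≤ 5 * C * t ^ 3 := key
      _ = 5 * C * |t| * t ^ 2 := by rw [abs_of_pos ht0]; try ring
end
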